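/- For all n, k ≥ 0, the degenerate Stirling number of the second kind admits the explicit formula: (1/k!) ∑_{l=0}^{k} C(k,l) (−1)^{k−l} (l)_{n,λ} equals S_{2,λ}(n,k) if n ≥ k, and equals 0 if n < k. -/

import Mathlib

open Real Filter Finset

/-- λ-falling factorial (x)_{n,λ} = x(x-λ)⋯(x-(n-1)λ). -/
noncomputable def dfall (lam x : ℝ) (n : ℕ) : ℝ := ∏ j ∈ Finset.range n, (x - j * lam)

/-- degenerate exponential e_λ(t) = (1+λt)^{1/λ}. -/
noncomputable def dexp (lam t : ℝ) : ℝ := (1 + lam * t) ^ (1 / lam)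

/-- Degenerate Stirling numbers of the second kind, via coefficients of (1/k!)(e_λ(t)-1)^k. -/
noncomputable def degStirling (lam : ℝ) (n k : ℕ) : ℝ :=
  (Nat.factorial n : ℝ) / (Nat.factorial k : ℝ) *
    PowerSeries.coeff n ((PowerSeries.mk (fun m => dfall lam 1 m / (Nat.factorial m : ℝ)) - 1) ^ k)

lemma dfall_zero (lam x : ℝ) : dfall lam x 0 = 1 := by simp [dfall]

lemma dfall_succ (lam x : ℝ) (n : ℕ) :
    dfall lam x (n + 1) = dfall lam x n * (x - n * lam) := by
  simp [dfall, Finset.prod_range_succ]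

/-- Vandermonde identity for λ-falling factorials. -/
lemma dfall_vandermonde (lam x y : ℝ) (n : ℕ) :
    dfall lam (x + y) n
      = ∑ j ∈ Finset.range (n + 1),
          (n.choose j : ℝ) * dfall lam x j * dfall lam y (n - j) := by
  induction n with
  | zero => simp [dfall]
  | succ n ih =>
    rw [dfall_succ, ih, Finset.sum_mul]
    have key : ∀ j ∈ Finset.range (n + 1),
        (n.choose j : ℝ) * dfall lam x j * dfall lam y (n - j) * (x + y - n * lam)
          = (n.choose j : ℝ) * dfall lam x (j + 1) * dfall lam y (n - j)
            + (n.choose j : ℝ) * dfall lam x j * dfall lam y (n - j + 1) := by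
      intro j hj
      rw [Finset.mem_range] at hj
      have hj' : j ≤ n := Nat.lt_succ_iff.mp hj
      have hcast : ((n - j : ℕ) : ℝ) = (n : ℝ) - (j : ℝ) := by
        rw [Nat.cast_sub hj']
      rw [dfall_succ, dfall_succ, hcast]
      ring
    rw [Finset.sum_congr rfl key, Finset.sum_add_distrib]
    rw [Finset.sum_range_succ'
      (fun j => ((n + 1).choose j : ℝ) * dfall lam x j * dfall lam y (n + 1 - j)) (n + 1)]
    have hR : ∑ i ∈ Finset.range (n + 1),
        ((n + 1).choose (i + 1) : ℝ) * dfall lam x (i + 1) * dfall lam y (n + 1 - (i + 1))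
        = (∑ i ∈ Finset.range (n + 1),
            (n.choose i : ℝ) * dfall lam x (i + 1) * dfall lam y (n - i))
          + ∑ i ∈ Finset.range (n + 1),
            (n.choose (i + 1) : ℝ) * dfall lam x (i + 1) * dfall lam y (n - i) := by
      rw [← Finset.sum_add_distrib]
      apply Finset.sum_congr rfl
      intro i hi
      have h1 : n + 1 - (i + 1) = n - i := by omega
      rw [h1, Nat.choose_succ_succ]
      push_cast
      ring
    rw [hR]
    have hL2 : ∑ j ∈ Finset.range (n + 1),
        (n.choose j : ℝ) * dfall lam x j * dfall lam y (n - j + 1)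
        = (∑ i ∈ Finset.range (n + 1),
            (n.choose (i + 1) : ℝ) * dfall lam x (i + 1) * dfall lam y (n - i))
          + dfall lam y (n + 1) := by
      have h1 : ∑ i ∈ Finset.range (n + 1),
          (n.choose (i + 1) : ℝ) * dfall lam x (i + 1) * dfall lam y (n - i)
          = ∑ i ∈ Finset.range n,
          (n.choose (i + 1) : ℝ) * dfall lam x (i + 1) * dfall lam y (n - i) := by
        rw [Finset.sum_range_succ]
        simp [Nat.choose_succ_self]
      rw [h1, Finset.sum_range_succ'
        (fun j => (n.choose j : ℝ) * dfall lam x j * dfall lam y (n - j + 1)) n]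
      congr 1
      · apply Finset.sum_congr rfl
        intro i hi
        rw [Finset.mem_range] at hi
        have : n - (i + 1) + 1 = n - i := by omega
        rw [this]
      · simp [dfall_zero]
    rw [hL2]
    simp [dfall_zero]
    ring

/-- The generating series of λ-falling factorials. -/
noncomputable def dser (lam x : ℝ) : PowerSeries ℝ :=
  PowerSeries.mk (fun m => dfall lam x m / (Nat.factorial m : ℝ))

lemma dser_mul (lam x y : ℝ) : dser lam x * dser lam y = dser lam (x + y) := by
  ext n
  rw [PowerSeries.coeff_mul]
  simp only [dser, PowerSeries.coeff_mk]
  rw [Finset.Nat.sum_antidiagonal_eq_sum_range_succ_mk, dfall_vandermonde]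
  have hn : (Nat.factorial n : ℝ) ≠ 0 := Nat.cast_ne_zero.mpr n.factorial_ne_zero
  rw [Finset.sum_div]
  apply Finset.sum_congr rfl
  intro j hj
  rw [Finset.mem_range] at hj
  have hj' : j ≤ n := Nat.lt_succ_iff.mp hj
  dsimp only
  have hjf : (j.factorial : ℝ) ≠ 0 := Nat.cast_ne_zero.mpr j.factorial_ne_zero
  have hnjf : ((n - j).factorial : ℝ) ≠ 0 := Nat.cast_ne_zero.mpr (n - j).factorial_ne_zero
  have hfac : (n.choose j : ℝ) * ((j.factorial : ℝ) * ((n - j).factorial : ℝ))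
      = (n.factorial : ℝ) := by
    have := Nat.choose_mul_factorial_mul_factorial hj'
    push_cast [← this]
    ring
  rw [div_mul_div_comm, div_eq_div_iff (by positivity) hn]
  linear_combination (-(dfall lam x j * dfall lam y (n - j))) * hfac

lemma dser_pow (lam : ℝ) (l : ℕ) : (dser lam 1) ^ l = dser lam l := by
  induction l with
  | zero =>
    ext n
    simp only [pow_zero, dser, PowerSeries.coeff_mk, PowerSeries.coeff_one]
    rcases Nat.eq_zero_or_pos n with h | h
    · subst h; simp [dfall_zero]
    · rw [if_neg h.ne']
      obtain ⟨m, rfl⟩ := Nat.exists_eq_succ_of_ne_zero h.ne'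
      have : dfall lam 0 (m + 1) = 0 := by
        simp [dfall, Finset.prod_range_succ']
      simp [this]
  | succ l ih =>
    rw [pow_succ, ih, dser_mul]
    norm_num

lemma coeff_sub_one_pow (lam : ℝ) (n k : ℕ) :
    PowerSeries.coeff n ((dser lam 1 - 1) ^ k)
      = ∑ l ∈ Finset.range (k + 1),
          (Nat.choose k l : ℝ) * (-1) ^ (k - l) * dfall lam l n / (Nat.factorial n : ℝ) := by
  rw [sub_pow, map_sum]
  apply Finset.sum_congr rfl
  intro l hl
  rw [Finset.mem_range] at hl
  rw [dser_pow, one_pow, mul_one]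
  have h1 : (-1 : PowerSeries ℝ) ^ (l + k) * dser lam l * (k.choose l : PowerSeries ℝ)
      = PowerSeries.C ((-1 : ℝ) ^ (l + k) * (k.choose l : ℝ)) * dser lam l := by
    rw [map_mul, map_pow, map_neg, map_one, map_natCast]
    ring
  rw [h1, PowerSeries.coeff_C_mul]
  have hsgn : (-1 : ℝ) ^ (l + k) = (-1 : ℝ) ^ (k - l) := by
    rw [show l + k = (k - l) + 2 * l by omega, pow_add]
    simp [pow_mul]
  rw [hsgn]
  simp only [dser, PowerSeries.coeff_mk]
  ring

theorem stmt10 (lam : ℝ) (n k : ℕ) :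
    (1 / (Nat.factorial k : ℝ)) *
        ∑ l ∈ Finset.range (k + 1), (Nat.choose k l : ℝ) * (-1) ^ (k - l) * dfall lam l n
      = if k ≤ n then degStirling lam n k else 0 := by
  have hn : (Nat.factorial n : ℝ) ≠ 0 := Nat.cast_ne_zero.mpr n.factorial_ne_zero
  have hE : (PowerSeries.mk (fun m => dfall lam 1 m / (Nat.factorial m : ℝ)))
      = dser lam 1 := rfl
  by_cases hkn : k ≤ n
  · rw [if_pos hkn]
    unfold degStirling
    rw [hE, coeff_sub_one_pow, ← Finset.sum_div]
    field_simp
  · rw [if_neg hkn]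
    push_neg at hkn
    have hconst : PowerSeries.constantCoeff (dser lam 1 - 1) = 0 := by
      simp [dser, PowerSeries.constantCoeff_mk, dfall_zero]
    have hdvd : (PowerSeries.X : PowerSeries ℝ) ^ k ∣ (dser lam 1 - 1) ^ k :=
      pow_dvd_pow_of_dvd (PowerSeries.X_dvd_iff.mpr hconst) k
    have h0 : PowerSeries.coeff n ((dser lam 1 - 1) ^ k) = 0 :=
      PowerSeries.X_pow_dvd_iff.mp hdvd n hkn
    rw [coeff_sub_one_pow, ← Finset.sum_div] at h0
    have := (div_eq_zero_iff.mp h0).resolve_right hn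
    rw [this, mul_zero]
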